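/- For every Schwartz function f : (Fin n → ℝ) × ℝ → ℂ, the function y ↦ (∏ i, (y i)^(r i)) • f(y, (p y)⁻¹) is Bochner integrable on Y₀ with respect to Lebesgue measure. (Integrability part of the paper's Lemma 6.2.) -/

import Mathlib

open MeasureTheory

theorem stmt_1 (n : ℕ) (l : Fin n → ℕ) (r : Fin n → ℤ)
    (hlr : ∀ i, l i = 0 → 0 ≤ r i)
    (f : SchwartzMap ((Fin n → ℝ) × ℝ) ℂ) :
    IntegrableOn
      (fun y : Fin n → ℝ => (∏ i, y i ^ r i : ℝ) • f (y, (∏ i, y i ^ l i)⁻¹))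
      {y : Fin n → ℝ | (∏ i, y i ^ l i) ≠ 0} volume := by
  classical
  set M : ℕ := ∑ i, (r i).natAbs with hM
  have hMi : ∀ i, (r i).natAbs ≤ M :=
    fun i => Finset.single_le_sum (f := fun i => (r i).natAbs)
      (fun _ _ => Nat.zero_le _) (Finset.mem_univ i)
  set c : Fin n → ℕ := fun i => (r i + M * l i).toNat with hcdef
  have hc : ∀ i, (c i : ℤ) = r i + M * l i := by
    intro i
    apply Int.toNat_of_nonneg
    rcases Nat.eq_zero_or_pos (l i) with h | h
    · simpa [h] using hlr i h
    · have h1 : (M : ℤ) ≤ (M : ℤ) * l i := by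
        have : (1 : ℤ) ≤ (l i : ℤ) := by exact_mod_cast h
        nlinarith [Int.natCast_nonneg M]
      have h2 : -r i ≤ ((r i).natAbs : ℤ) := by
        simpa using Int.le_natAbs (a := -r i)
      have h3 : ((r i).natAbs : ℤ) ≤ (M : ℤ) := by exact_mod_cast hMi i
      linarith
  -- key algebraic identity on Y₀
  have hkey : ∀ y : Fin n → ℝ, (∏ i, y i ^ l i) ≠ 0 →
      (∏ i, y i ^ r i) = ((∏ i, y i ^ l i)⁻¹) ^ M * ∏ i, y i ^ c i := by
    intro y hy
    have hne : ∀ i, l i ≠ 0 → y i ≠ 0 := by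
      intro i hi
      have := Finset.prod_ne_zero_iff.mp hy i (Finset.mem_univ i)
      exact fun h0 => this (by simp [h0, zero_pow hi])
    have hprod : (∏ i, y i ^ c i) = (∏ i, y i ^ r i) * (∏ i, y i ^ l i) ^ M := by
      rw [← Finset.prod_pow, ← Finset.prod_mul_distrib]
      refine Finset.prod_congr rfl fun i _ => ?_
      rcases Nat.eq_zero_or_pos (l i) with h | h
      · have hcr : (c i : ℤ) = r i := by rw [hc i]; simp [h]
        rw [h, pow_zero, one_pow, mul_one, ← zpow_natCast (y i) (c i), hcr]
      · have hyi : y i ≠ 0 := hne i h.ne'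
        rw [← zpow_natCast (y i) (c i), hc i, zpow_add₀ hyi]
        congr 1
        rw [show ((M : ℤ) * l i) = ((l i * M : ℕ) : ℤ) by push_cast; ring,
          zpow_natCast, pow_mul]
    have hpM : (∏ i, y i ^ l i) ^ M ≠ 0 := pow_ne_zero _ hy
    rw [hprod, inv_pow]
    field_simp
  -- Schwartz decay bound
  set K : ℕ := M + (∑ i, c i) + (n + 1) with hK
  set D : ℝ := 2 ^ K * (Finset.Iic (K, 0)).sup
    (fun m => SchwartzMap.seminorm ℝ m.1 m.2) f with hD
  have hD0 : 0 ≤ D := by positivity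
  have hf : ∀ x : (Fin n → ℝ) × ℝ, (1 + ‖x‖) ^ K * ‖f x‖ ≤ D := by
    intro x
    have := SchwartzMap.one_add_le_sup_seminorm_apply (𝕜 := ℝ) (m := (K, 0))
      (k := K) (n := 0) le_rfl le_rfl f x
    simpa [norm_iteratedFDeriv_zero] using this
  -- pointwise bound on Y₀
  have hbound : ∀ y : Fin n → ℝ, (∏ i, y i ^ l i) ≠ 0 →
      ‖(∏ i, y i ^ r i : ℝ) • f (y, (∏ i, y i ^ l i)⁻¹)‖ ≤
        D * (1 + ‖y‖) ^ (-(n + 1 : ℝ)) := by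
    intro y hy
    set t : ℝ := (∏ i, y i ^ l i)⁻¹ with ht
    set x : (Fin n → ℝ) × ℝ := (y, t) with hx
    have h1y : (0:ℝ) < 1 + ‖y‖ := by positivity
    have h1x : (0:ℝ) < 1 + ‖x‖ := by positivity
    have hyx : 1 + ‖y‖ ≤ 1 + ‖x‖ := by
      have : ‖y‖ ≤ ‖x‖ := norm_fst_le x
      linarith
    have htx : |t| ≤ 1 + ‖x‖ := by
      have : ‖t‖ ≤ ‖x‖ := norm_snd_le x
      rw [Real.norm_eq_abs] at this
      linarith
    have hnorm : ‖(∏ i, y i ^ r i : ℝ) • f x‖ =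
        |t| ^ M * (∏ i, |y i| ^ c i) * ‖f x‖ := by
      rw [norm_smul, Real.norm_eq_abs, hkey y hy, abs_mul, abs_pow, ← ht,
        Finset.abs_prod]
      simp only [abs_pow]
    have hyi : ∀ i, |y i| ≤ 1 + ‖x‖ := by
      intro i
      have h1 : |y i| ≤ ‖y‖ := by
        simpa [Real.norm_eq_abs] using norm_le_pi_norm y i
      linarith [hyx, h1]
    have hmain : ‖(∏ i, y i ^ r i : ℝ) • f x‖ * (1 + ‖y‖) ^ (n + 1) ≤ D := by
      calc ‖(∏ i, y i ^ r i : ℝ) • f x‖ * (1 + ‖y‖) ^ (n + 1)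
          ≤ ((1 + ‖x‖) ^ M * (∏ i, (1 + ‖x‖) ^ c i) * ‖f x‖) * (1 + ‖x‖) ^ (n + 1) := by
            rw [hnorm]
            gcongr
            all_goals first
              | exact htx
              | exact hyi _
        _ = (1 + ‖x‖) ^ K * ‖f x‖ := by
            rw [Finset.prod_pow_eq_pow_sum, hK]
            ring
        _ ≤ D := hf x
    have : ‖(∏ i, y i ^ r i : ℝ) • f x‖ ≤ D / (1 + ‖y‖) ^ (n + 1) := by
      rw [le_div_iff₀ (by positivity)]
      exact hmain
    calc ‖(∏ i, y i ^ r i : ℝ) • f x‖ ≤ D / (1 + ‖y‖) ^ (n + 1) := this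
      _ = D * (1 + ‖y‖) ^ (-(n + 1 : ℝ)) := by
          rw [Real.rpow_neg (le_of_lt h1y), div_eq_mul_inv]
          congr 1
          rw [← Real.rpow_natCast (1 + ‖y‖) (n + 1)]
          norm_num
  -- measurability
  have hYmeas : MeasurableSet {y : Fin n → ℝ | (∏ i, y i ^ l i) ≠ 0} := by
    have hp : Continuous fun y : Fin n → ℝ => ∏ i, y i ^ l i := by
      exact continuous_finset_prod _ fun i _ => (continuous_apply i).pow _
    exact (isOpen_compl_singleton.preimage hp).measurableSet
  have hmeas : AEStronglyMeasurable
      (fun y : Fin n → ℝ => (∏ i, y i ^ r i : ℝ) • f (y, (∏ i, y i ^ l i)⁻¹))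
      (volume.restrict {y : Fin n → ℝ | (∏ i, y i ^ l i) ≠ 0}) := by
    apply Measurable.aestronglyMeasurable
    apply Measurable.fun_smul
    · have hz : ∀ m : ℤ, Measurable fun x : ℝ => x ^ m := by
        intro m
        rcases m with k | k
        · simpa using (measurable_id : Measurable fun x : ℝ => x).pow_const k
        · simpa [zpow_negSucc] using ((measurable_id : Measurable fun x : ℝ => x).pow_const (k + 1)).fun_inv
      exact Finset.measurable_prod _ fun i _ => (hz (r i)).comp (measurable_pi_apply i)
    · exact f.continuous.measurable.comp
        (measurable_id.prodMk ((Finset.measurable_prod _ fun i _ =>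
          (measurable_pi_apply i).pow_const _).inv))
  -- conclude
  have hint : Integrable (fun y : Fin n → ℝ => D * (1 + ‖y‖) ^ (-(n + 1 : ℝ)))
      (volume.restrict {y : Fin n → ℝ | (∏ i, y i ^ l i) ≠ 0}) := by
    apply Integrable.restrict
    apply Integrable.const_mul
    apply integrable_one_add_norm
    simp
  refine Integrable.mono' hint hmeas ?_
  rw [ae_restrict_iff' hYmeas]
  exact ae_of_all _ fun y hy => hbound y hy
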